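/- arXiv:1909.02348 — 2 statements merged into one kernel-verified Lean document; each statement's English description precedes it below -/
import Mathlib

section
/- Let n be a positive natural number, 0 < μ ≤ ε, ξ > 0, and t ≥ 0. Let φ : ℝ → ℝ be continuous and nonnegative with φ(x) ≤ a₀ + a₁x for all x ∈ ℝ; let p : ℝ → ℝ be Lipschitz continuous with constant L_p and p(0) = 0; let A₀ : ℝⁿ → ℝ be measurable and essentially bounded with ‖A₀‖_{L^∞} ≤ M_A. For k ∈ L²(ℝⁿ) define 𝒫(k)(x) = A₀(x) · exp( t · (∫_{ℝⁿ} φ(k(y)) Γ_μ(x,y) dy) / (∫_{ℝⁿ} φ(k(y)) Γ_ε(x,y) dy + ξ) ) · p(k(x)). Then 𝒫(k) ∈ L²(ℝⁿ) and ‖𝒫(k)‖_{L²(ℝⁿ)} ≤ M_A · exp(t·(ε/μ)ⁿ) · L_p · ‖k‖_{L²(ℝⁿ)}. -/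
open Real MeasureTheory

/-- The Gaussian kernel `Γ_ν(x,y) = (2πν²)^{-n/2} · exp(−‖x−y‖₂²/(2ν²))` on `ℝⁿ`. -/
noncomputable def gaussK (n : ℕ) (ν : ℝ) (x y : EuclideanSpace ℝ (Fin n)) : ℝ :=
  (2 * π * ν ^ 2) ^ (-(n : ℝ) / 2) * Real.exp (-‖x - y‖ ^ 2 / (2 * ν ^ 2))

lemma gaussK_nonneg (n : ℕ) (ν : ℝ) (x y : EuclideanSpace ℝ (Fin n)) : 0 ≤ gaussK n ν x y := by
  unfold gaussK; positivity

lemma gaussK_continuous (n : ℕ) (ν : ℝ) :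
    Continuous (fun q : EuclideanSpace ℝ (Fin n) × EuclideanSpace ℝ (Fin n) =>
      gaussK n ν q.1 q.2) := by
  unfold gaussK; fun_prop

lemma gauss_int {n : ℕ} (b c : ℝ) (hb : 0 < b) (x : EuclideanSpace ℝ (Fin n)) :
    Integrable (fun y => c * Real.exp (-b * ‖x - y‖ ^ 2)) := by
  have h0 : Integrable (fun v : EuclideanSpace ℝ (Fin n) => Real.exp (-b * ‖v‖ ^ 2)) := by
    have := (GaussianFourier.integrable_cexp_neg_mul_sq_norm_add
      (b := (b : ℂ)) (by simpa using hb) 0 (0 : EuclideanSpace ℝ (Fin n))).norm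
    simpa [Complex.norm_exp, ← Complex.ofReal_pow] using this
  have h1 := h0.comp_sub_right x
  rw [show (fun y => c * Real.exp (-b * ‖x - y‖ ^ 2))
      = fun y : EuclideanSpace ℝ (Fin n) => c * Real.exp (-b * ‖y - x‖ ^ 2) by
    funext y; rw [norm_sub_rev]]
  exact h1.const_mul c

lemma gaussK_rep {n : ℕ} (ν : ℝ) (x y : EuclideanSpace ℝ (Fin n)) :
    gaussK n ν x y = (2 * π * ν ^ 2) ^ (-(n : ℝ) / 2)
      * Real.exp (-(1 / (2 * ν ^ 2)) * ‖x - y‖ ^ 2) := by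
  unfold gaussK; congr 1; ring

lemma gaussK_integrable {n : ℕ} {ν : ℝ} (hν : 0 < ν) (x : EuclideanSpace ℝ (Fin n)) :
    Integrable (fun y => gaussK n ν x y) := by
  simp_rw [gaussK_rep]
  exact gauss_int _ _ (by positivity) x

lemma gaussK_mem2 {n : ℕ} {ν : ℝ} (hν : 0 < ν) (x : EuclideanSpace ℝ (Fin n)) :
    MemLp (fun y => gaussK n ν x y) 2 := by
  have hc : Continuous (fun y : EuclideanSpace ℝ (Fin n) => gaussK n ν x y) := by
    unfold gaussK; fun_prop
  rw [memLp_two_iff_integrable_sq hc.aestronglyMeasurable]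
  have : (fun y : EuclideanSpace ℝ (Fin n) => gaussK n ν x y ^ 2)
      = fun y => ((2 * π * ν ^ 2) ^ (-(n : ℝ) / 2)) ^ 2
          * Real.exp (-(2 * (1 / (2 * ν ^ 2))) * ‖x - y‖ ^ 2) := by
    funext y
    rw [gaussK, mul_pow, sq (Real.exp _), ← Real.exp_add]
    congr 1; ring
  rw [this]
  exact gauss_int _ _ (by positivity) x

lemma gauss_const_comp {n : ℕ} {μ ε : ℝ} (hμ : 0 < μ) (hμε : μ ≤ ε) :
    (2 * π * μ ^ 2) ^ (-(n : ℝ) / 2) = (ε / μ) ^ n * (2 * π * ε ^ 2) ^ (-(n : ℝ) / 2) := by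
  have hε : 0 < ε := lt_of_lt_of_le hμ hμε
  have h1 : (2 * π * μ ^ 2) = (2 * π * ε ^ 2) * ((μ / ε) ^ 2) := by
    field_simp
  rw [h1, Real.mul_rpow (by positivity) (by positivity)]
  have h2 : ((μ / ε) ^ 2 : ℝ) ^ (-(n : ℝ) / 2) = (ε / μ) ^ n := by
    rw [← Real.rpow_natCast (μ / ε) 2, ← Real.rpow_mul (by positivity)]
    rw [show ((2 : ℕ) : ℝ) * (-(n : ℝ) / 2) = -(n : ℝ) by push_cast; ring]
    rw [Real.rpow_neg (by positivity), ← Real.inv_rpow (by positivity), inv_div,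
      Real.rpow_natCast]
  rw [h2]; ring

lemma gaussK_comp {n : ℕ} {μ ε : ℝ} (hμ : 0 < μ) (hμε : μ ≤ ε)
    (x y : EuclideanSpace ℝ (Fin n)) :
    gaussK n μ x y ≤ (ε / μ) ^ n * gaussK n ε x y := by
  have hε : 0 < ε := lt_of_lt_of_le hμ hμε
  unfold gaussK
  rw [gauss_const_comp hμ hμε, mul_assoc]
  refine mul_le_mul_of_nonneg_left (mul_le_mul_of_nonneg_left ?_ (by positivity))
    (by positivity)
  rw [Real.exp_le_exp, neg_div, neg_div, neg_le_neg_iff]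
  exact div_le_div_of_nonneg_left (by positivity) (by positivity) (by nlinarith)

/-- Boundedness of the productivity-production operator `𝒫` in `L²(ℝⁿ)`:
`𝒫(k) ∈ L²` and `‖𝒫(k)‖_{L²} ≤ M_A · exp(t(ε/μ)ⁿ) · L_p · ‖k‖_{L²}`. -/
theorem productivity_operator_L2_bound (n : ℕ) (hn : 0 < n)
    (μ ε ξ t : ℝ) (hμ : 0 < μ) (hμε : μ ≤ ε) (hξ : 0 < ξ) (ht : 0 ≤ t)
    (φ : ℝ → ℝ) (hφc : Continuous φ) (hφ0 : ∀ x, 0 ≤ φ x)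
    (a₀ a₁ : ℝ) (hφlin : ∀ x, φ x ≤ a₀ + a₁ * x)
    (p : ℝ → ℝ) (Lp : ℝ) (hLp : 0 ≤ Lp)
    (hp : ∀ x y, |p x - p y| ≤ Lp * |x - y|) (hp0 : p 0 = 0)
    (A₀ : EuclideanSpace ℝ (Fin n) → ℝ) (hA : Measurable A₀)
    (MA : ℝ) (hMA : ∀ᵐ x ∂(volume : Measure (EuclideanSpace ℝ (Fin n))), |A₀ x| ≤ MA)
    (k : EuclideanSpace ℝ (Fin n) → ℝ) (hk : MemLp k 2) :
    MemLp (fun x => A₀ x *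
        Real.exp (t * ((∫ y, φ (k y) * gaussK n μ x y) /
          ((∫ y, φ (k y) * gaussK n ε x y) + ξ))) * p (k x)) 2 ∧
    eLpNorm (fun x => A₀ x *
        Real.exp (t * ((∫ y, φ (k y) * gaussK n μ x y) /
          ((∫ y, φ (k y) * gaussK n ε x y) + ξ))) * p (k x)) 2 volume
      ≤ ENNReal.ofReal (MA * Real.exp (t * (ε / μ) ^ n) * Lp) * eLpNorm k 2 volume := by
  have hε : 0 < ε := lt_of_lt_of_le hμ hμε
  set C : ℝ := MA * Real.exp (t * (ε / μ) ^ n) * Lp with hC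
  -- MA is nonnegative
  have hMA0 : 0 ≤ MA := by
    obtain ⟨x, hx⟩ := hMA.exists
    exact (abs_nonneg _).trans hx
  -- p is Lipschitz, hence continuous, and |p s| ≤ Lp * |s|
  have hpc : Continuous p := by
    refine (LipschitzWith.of_dist_le_mul (K := Real.toNNReal Lp) (f := p)
      fun x y => ?_).continuous
    rw [Real.coe_toNNReal _ hLp]
    simpa [Real.dist_eq] using hp x y
  have hpk : ∀ s : ℝ, |p s| ≤ Lp * |s| := fun s => by
    simpa [hp0] using hp s 0
  -- integrability of the integrand
  have hφk : AEStronglyMeasurable (fun y => φ (k y))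
      (volume : Measure (EuclideanSpace ℝ (Fin n))) :=
    hφc.comp_aestronglyMeasurable hk.1
  have hInt : ∀ ν : ℝ, 0 < ν → ∀ x,
      Integrable (fun y => φ (k y) * gaussK n ν x y) := by
    intro ν hν x
    have hkG : Integrable (fun y => |k y| * gaussK n ν x y) := by
      have h1 : MemLp ((fun y => k y) • (fun y => gaussK n ν x y)) 1 :=
        (gaussK_mem2 hν x).smul hk
      have h2 := (memLp_one_iff_integrable.1 h1).abs
      refine h2.congr (ae_of_all _ fun y => ?_)
      simp [abs_mul, abs_of_nonneg (gaussK_nonneg n ν x y)]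
    have hg : Integrable (fun y => |a₀| * gaussK n ν x y
        + |a₁| * (|k y| * gaussK n ν x y)) :=
      ((gaussK_integrable hν x).const_mul _).add (hkG.const_mul _)
    refine hg.mono' (hφk.mul ((gaussK_continuous n ν).comp
      (Continuous.prodMk_right x)).aestronglyMeasurable) (ae_of_all _ fun y => ?_)
    have hG0 := gaussK_nonneg n ν x y
    have hφ1 : φ (k y) ≤ |a₀| + |a₁| * |k y| :=
      (hφlin (k y)).trans (by
        have := le_abs_self (a₁ * k y)
        have := le_abs_self a₀
        rw [abs_mul] at *
        nlinarith [abs_nonneg (k y)])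
    have : ‖φ (k y) * gaussK n ν x y‖ = φ (k y) * gaussK n ν x y := by
      rw [Real.norm_eq_abs, abs_of_nonneg (mul_nonneg (hφ0 _) hG0)]
    rw [this]
    nlinarith [mul_le_mul_of_nonneg_right hφ1 hG0]
  -- nonnegativity and comparison of the two integrals
  have hI0 : ∀ ν : ℝ, ∀ x, (0:ℝ) ≤ ∫ y, φ (k y) * gaussK n ν x y :=
    fun ν x => integral_nonneg fun y => mul_nonneg (hφ0 _) (gaussK_nonneg n ν x y)
  have hIcomp : ∀ x, (∫ y, φ (k y) * gaussK n μ x y)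
      ≤ (ε / μ) ^ n * ∫ y, φ (k y) * gaussK n ε x y := by
    intro x
    rw [← integral_const_mul]
    refine integral_mono_of_nonneg
      (ae_of_all _ fun y => mul_nonneg (hφ0 _) (gaussK_nonneg n μ x y))
      ((hInt ε hε x).const_mul _) (ae_of_all _ fun y => ?_)
    have := mul_le_mul_of_nonneg_left (gaussK_comp hμ hμε x y) (hφ0 (k y))
    calc φ (k y) * gaussK n μ x y ≤ φ (k y) * ((ε/μ)^n * gaussK n ε x y) := this
      _ = (ε/μ)^n * (φ (k y) * gaussK n ε x y) := by ring
  -- bound on the exponent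
  have hExp : ∀ x, t * ((∫ y, φ (k y) * gaussK n μ x y) /
      ((∫ y, φ (k y) * gaussK n ε x y) + ξ)) ≤ t * (ε / μ) ^ n := by
    intro x
    refine mul_le_mul_of_nonneg_left ?_ ht
    rw [div_le_iff₀ (by have := hI0 ε x; linarith)]
    have h1 := hIcomp x
    have h2 : (ε/μ)^n * (∫ y, φ (k y) * gaussK n ε x y)
        ≤ (ε/μ)^n * ((∫ y, φ (k y) * gaussK n ε x y) + ξ) :=
      mul_le_mul_of_nonneg_left (by linarith) (by positivity)
    linarith
  -- measurability of the operator
  set k' := hk.1.mk k with hk'def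
  have hkk' : k =ᵐ[volume] k' := hk.1.ae_eq_mk
  have hIeq : ∀ ν : ℝ, (fun x => ∫ y, φ (k y) * gaussK n ν x y)
      = fun x => ∫ y, φ (k' y) * gaussK n ν x y := by
    intro ν
    funext x
    exact integral_congr_ae (hkk'.mono fun y hy => by dsimp only; rw [hy])
  have hImeas : ∀ ν : ℝ, StronglyMeasurable (fun x => ∫ y, φ (k y) * gaussK n ν x y) := by
    intro ν
    rw [hIeq ν]
    apply StronglyMeasurable.integral_prod_right'
      (f := fun q : EuclideanSpace ℝ (Fin n) × EuclideanSpace ℝ (Fin n) =>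
        φ (k' q.2) * gaussK n ν q.1 q.2)
    exact ((hφc.measurable.comp
      (hk.1.measurable_mk.comp measurable_snd)).mul
      (gaussK_continuous n ν).measurable).stronglyMeasurable
  have hFm : AEStronglyMeasurable (fun x => A₀ x *
      Real.exp (t * ((∫ y, φ (k y) * gaussK n μ x y) /
        ((∫ y, φ (k y) * gaussK n ε x y) + ξ))) * p (k x)) volume := by
    refine AEStronglyMeasurable.mul (AEStronglyMeasurable.mul hA.aestronglyMeasurable ?_)
      (hpc.comp_aestronglyMeasurable hk.1)
    refine (Real.measurable_exp.comp (Measurable.const_mul (Measurable.div ?_ ?_) t)).aestronglyMeasurable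
    · exact (hImeas μ).measurable
    · exact ((hImeas ε).measurable).add_const ξ
  -- pointwise bound
  have hpt : ∀ᵐ x ∂(volume : Measure (EuclideanSpace ℝ (Fin n))),
      ‖A₀ x * Real.exp (t * ((∫ y, φ (k y) * gaussK n μ x y) /
        ((∫ y, φ (k y) * gaussK n ε x y) + ξ))) * p (k x)‖ ≤ ‖C * k x‖ := by
    filter_upwards [hMA] with x hx
    have h2 : Real.exp (t * ((∫ y, φ (k y) * gaussK n μ x y) /
        ((∫ y, φ (k y) * gaussK n ε x y) + ξ))) ≤ Real.exp (t * (ε / μ) ^ n) :=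
      Real.exp_le_exp.2 (hExp x)
    have h3 := hpk (k x)
    have hnorm : ‖C * k x‖ = C * |k x| := by
      rw [Real.norm_eq_abs, abs_mul, abs_of_nonneg (by positivity)]
    rw [hnorm, Real.norm_eq_abs, abs_mul, abs_mul, Real.abs_exp, hC]
    calc |A₀ x| * Real.exp (t * ((∫ y, φ (k y) * gaussK n μ x y) /
          ((∫ y, φ (k y) * gaussK n ε x y) + ξ))) * |p (k x)|
        ≤ MA * Real.exp (t * (ε / μ) ^ n) * (Lp * |k x|) := by
          refine mul_le_mul (mul_le_mul hx h2 (Real.exp_pos _).le hMA0) h3 (abs_nonneg _)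
            (by positivity)
      _ = MA * Real.exp (t * (ε / μ) ^ n) * Lp * |k x| := by ring
  refine ⟨MemLp.of_le (hk.const_mul C) hFm hpt, ?_⟩
  calc eLpNorm (fun x => A₀ x * Real.exp (t * ((∫ y, φ (k y) * gaussK n μ x y) /
        ((∫ y, φ (k y) * gaussK n ε x y) + ξ))) * p (k x)) 2 volume
      ≤ eLpNorm (fun x => C * k x) 2 volume := eLpNorm_mono_ae hpt
    _ = ENNReal.ofReal C * eLpNorm k 2 volume := by
        rw [show (fun x => C * k x) = C • k from rfl, eLpNorm_const_smul,
          Real.enorm_eq_ofReal (by positivity)]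
end

section
/- Let n be a positive natural number and ν > 0. Let φ : ℝ → ℝ be Lipschitz continuous with constant L_φ and let A₀ ∈ L²(ℝⁿ). For a measurable v : ℝⁿ → ℝ define Φ_ν(v)(x) = ∫_{ℝⁿ} φ(v(y)) Γ_ν(x,y) dy. Then for all v₁, v₂ ∈ L²(ℝⁿ) one has ‖A₀ · (Φ_ν(v₁) − Φ_ν(v₂))‖_{L²(ℝⁿ)} ≤ L_φ · ‖v₁ − v₂‖_{L²(ℝⁿ)} · ‖A₀‖_{L²(ℝⁿ)} · (2ν√π)^{-n/2}. -/
open Real MeasureTheory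
open scoped ENNReal

lemma aux_integrable_gauss {n : ℕ} {b : ℝ} (hb : 0 < b) :
    Integrable (fun v : EuclideanSpace ℝ (Fin n) => rexp (-b * ‖v‖ ^ 2)) := by
  have h := (GaussianFourier.integrable_cexp_neg_mul_sq_norm_add
      (V := EuclideanSpace ℝ (Fin n)) (b := (b : ℂ)) (by simpa using hb) 0 0).re
  refine h.congr (Filter.Eventually.of_forall fun v => ?_)
  show Complex.re (Complex.exp _) = _
  have : (-(b:ℂ) * (‖v‖:ℂ) ^ 2 + 0 * ((inner ℝ (0 : EuclideanSpace ℝ (Fin n)) v : ℝ) : ℂ))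
      = ((-b * ‖v‖^2 : ℝ) : ℂ) := by push_cast; ring
  rw [this, ← Complex.ofReal_exp, Complex.ofReal_re]

lemma aux_integral_gauss {n : ℕ} {b : ℝ} (hb : 0 < b) :
    ∫ v : EuclideanSpace ℝ (Fin n), rexp (-b * ‖v‖ ^ 2) = (π / b) ^ ((n:ℝ) / 2) := by
  rw [GaussianFourier.integral_rexp_neg_mul_sq_norm hb]
  norm_num [finrank_euclideanSpace_fin]

variable {n : ℕ} {ν : ℝ}

lemma gauss_nonneg (hν : 0 < ν) (x y : EuclideanSpace ℝ (Fin n)) : 0 ≤ gaussK n ν x y := by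
  unfold gaussK
  positivity

lemma gauss_cont (x : EuclideanSpace ℝ (Fin n)) : Continuous (fun y => gaussK n ν x y) := by
  unfold gaussK
  fun_prop

lemma gauss_sq (hν : 0 < ν) (x y : EuclideanSpace ℝ (Fin n)) :
    gaussK n ν x y ^ 2
      = ((2 * π * ν ^ 2) ^ (-(n : ℝ) / 2)) ^ 2 * rexp (-(ν ^ 2)⁻¹ * ‖x - y‖ ^ 2) := by
  unfold gaussK
  rw [mul_pow, ← Real.exp_nat_mul]
  congr 1
  field_simp
  ring

lemma gauss_eq (hν : 0 < ν) (x y : EuclideanSpace ℝ (Fin n)) :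
    gaussK n ν x y
      = (2 * π * ν ^ 2) ^ (-(n : ℝ) / 2) * rexp (-(2 * ν ^ 2)⁻¹ * ‖x - y‖ ^ 2) := by
  unfold gaussK
  congr 1
  field_simp

lemma gauss_integrable (hν : 0 < ν) (x : EuclideanSpace ℝ (Fin n)) :
    Integrable (fun y => gaussK n ν x y) := by
  have h := ((aux_integrable_gauss (n := n) (b := (2 * ν ^ 2)⁻¹)
      (by positivity)).comp_sub_left x).const_mul ((2 * π * ν ^ 2) ^ (-(n : ℝ) / 2))
  exact h.congr (Filter.Eventually.of_forall fun y => (gauss_eq hν x y).symm)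

lemma gauss_sq_integrable (hν : 0 < ν) (x : EuclideanSpace ℝ (Fin n)) :
    Integrable (fun y => gaussK n ν x y ^ 2) := by
  have h := ((aux_integrable_gauss (n := n) (b := (ν ^ 2)⁻¹)
      (by positivity)).comp_sub_left x).const_mul (((2 * π * ν ^ 2) ^ (-(n : ℝ) / 2)) ^ 2)
  exact h.congr (Filter.Eventually.of_forall fun y => (gauss_sq hν x y).symm)

lemma gauss_memℒp2 (hν : 0 < ν) (x : EuclideanSpace ℝ (Fin n)) :
    MemLp (fun y => gaussK n ν x y) 2 (volume : Measure (EuclideanSpace ℝ (Fin n))) :=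
  (memLp_two_iff_integrable_sq (gauss_cont x).aestronglyMeasurable).2 (gauss_sq_integrable hν x)

lemma gauss_sq_integral (hν : 0 < ν) (x : EuclideanSpace ℝ (Fin n)) :
    ∫ y, gaussK n ν x y ^ 2 = ((2 * ν * Real.sqrt π) ^ n)⁻¹ := by
  have hπ := pi_pos
  simp_rw [gauss_sq hν x]
  rw [integral_const_mul, integral_sub_left_eq_self
      (fun y : EuclideanSpace ℝ (Fin n) => rexp (-(ν ^ 2)⁻¹ * ‖y‖ ^ 2)) volume x,
    aux_integral_gauss (by positivity)]
  have h1 : (π / (ν ^ 2)⁻¹) ^ ((n : ℝ) / 2) = (Real.sqrt π * ν) ^ n := by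
    have : π / (ν ^ 2)⁻¹ = (Real.sqrt π * ν) ^ 2 := by
      rw [div_inv_eq_mul, mul_pow, Real.sq_sqrt hπ.le]
    rw [this, ← Real.rpow_natCast (Real.sqrt π * ν) 2, ← Real.rpow_mul (by positivity),
      ← Real.rpow_natCast (Real.sqrt π * ν) n]
    congr 1
    push_cast
    ring
  have h2 : ((2 * π * ν ^ 2) ^ (-(n : ℝ) / 2)) ^ 2 = ((2 * π * ν ^ 2) ^ n)⁻¹ := by
    rw [← Real.rpow_natCast ((2 * π * ν ^ 2) ^ (-(n : ℝ) / 2)) 2, ← Real.rpow_mul (by positivity)]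
    rw [show (-(n : ℝ) / 2) * (2 : ℕ) = -(n : ℝ) by push_cast; ring,
      Real.rpow_neg (by positivity), Real.rpow_natCast]
  rw [h1, h2]
  have key : (2 * ν * Real.sqrt π) ^ n * (Real.sqrt π * ν) ^ n = (2 * π * ν ^ 2) ^ n := by
    rw [← mul_pow]
    congr 1
    have := Real.sq_sqrt hπ.le
    nlinarith [Real.sqrt_nonneg π]
  have hpos : (0:ℝ) < (2 * π * ν ^ 2) ^ n := by positivity
  have hpos2 : (0:ℝ) < (2 * ν * Real.sqrt π) ^ n := by positivity
  field_simp
  rw [mul_comm ν (Real.sqrt π)]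
  linarith [key]

lemma key_bound (hν : 0 < ν) {φ : ℝ → ℝ} {Lφ : ℝ} (hLφ : 0 ≤ Lφ)
    (hφ : ∀ x y, |φ x - φ y| ≤ Lφ * |x - y|)
    {v₁ v₂ : EuclideanSpace ℝ (Fin n) → ℝ} (hv₁ : MemLp v₁ 2) (hv₂ : MemLp v₂ 2)
    (x : EuclideanSpace ℝ (Fin n)) :
    |(∫ y, φ (v₁ y) * gaussK n ν x y) - ∫ y, φ (v₂ y) * gaussK n ν x y|
      ≤ Lφ * (∫ y, |v₁ y - v₂ y| ^ (2 : ℝ)) ^ (1/2 : ℝ) *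
          Real.sqrt (((2 * ν * Real.sqrt π) ^ n)⁻¹) := by
  set g : EuclideanSpace ℝ (Fin n) → ℝ := fun y => gaussK n ν x y with hg
  have hφc : Continuous φ := by
    refine (LipschitzWith.of_dist_le_mul (K := Lφ.toNNReal) fun a b => ?_).continuous
    rw [Real.dist_eq, Real.dist_eq, Real.coe_toNNReal Lφ hLφ]
    exact hφ a b
  have h2 : (ENNReal.ofReal (2 : ℝ)) = 2 := by simp
  have hrpow : ∀ a : ℝ, a ^ (2 : ℝ) = a ^ 2 := fun a => by
    rw [show (2 : ℝ) = ((2 : ℕ) : ℝ) by norm_num, Real.rpow_natCast]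
  have hmemφ : ∀ v : EuclideanSpace ℝ (Fin n) → ℝ, MemLp v 2 →
      MemLp (fun y => φ (v y) - φ 0) 2 (volume : Measure (EuclideanSpace ℝ (Fin n))) := by
    intro v hv
    refine MemLp.of_le (hv.const_mul Lφ)
      ((hφc.comp_aestronglyMeasurable hv.1).sub aestronglyMeasurable_const) ?_
    refine Filter.Eventually.of_forall fun y => ?_
    rw [Real.norm_eq_abs, Real.norm_eq_abs, abs_mul, abs_of_nonneg hLφ]
    simpa using hφ (v y) 0
  have hint : ∀ v : EuclideanSpace ℝ (Fin n) → ℝ, MemLp v 2 →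
      Integrable (fun y => φ (v y) * g y) := by
    intro v hv
    have h1 : Integrable (fun y => (φ (v y) - φ 0) * g y) := by
      have := (gauss_memℒp2 hν x).smul (hmemφ v hv) (r := 1)
      exact memLp_one_iff_integrable.mp this
    have h2' : Integrable (fun y => φ 0 * g y) := (gauss_integrable hν x).const_mul _
    exact ((h1.add h2').congr (Filter.Eventually.of_forall fun y => by simp; ring))
  have hint₁ := hint v₁ hv₁
  have hint₂ := hint v₂ hv₂
  have habs : MemLp (fun y => |v₁ y - v₂ y|) 2
      (volume : Measure (EuclideanSpace ℝ (Fin n))) := (hv₁.sub hv₂).norm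
  have hpq : Real.HolderConjugate 2 2 := Real.HolderConjugate.two_two
  have hK : (∫ y, g y ^ (2 : ℝ)) ^ (1/2 : ℝ) = Real.sqrt (((2 * ν * Real.sqrt π) ^ n)⁻¹) := by
    simp_rw [hrpow, hg]
    rw [gauss_sq_integral hν x, ← Real.sqrt_eq_rpow]
  have hcs : ∫ y, |v₁ y - v₂ y| * g y ≤
      (∫ y, |v₁ y - v₂ y| ^ (2 : ℝ)) ^ (1/2 : ℝ) *
        Real.sqrt (((2 * ν * Real.sqrt π) ^ n)⁻¹) := by
    rw [← hK]
    exact integral_mul_le_Lp_mul_Lq_of_nonneg hpq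
      (Filter.Eventually.of_forall fun y => abs_nonneg _)
      (Filter.Eventually.of_forall fun y => gauss_nonneg hν x y)
      (by rw [h2]; exact habs) (by rw [h2]; exact gauss_memℒp2 hν x)
  have e1 : (∫ y, φ (v₁ y) * g y) - ∫ y, φ (v₂ y) * g y
      = ∫ y, (φ (v₁ y) - φ (v₂ y)) * g y := by
    rw [← integral_sub hint₁ hint₂]
    exact integral_congr_ae (Filter.Eventually.of_forall fun y => by ring)
  have hR : Integrable (fun y => Lφ * |v₁ y - v₂ y| * g y) := by
    have := (gauss_memℒp2 hν x).smul (habs.const_mul Lφ) (r := 1)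
    exact memLp_one_iff_integrable.mp this
  calc |(∫ y, φ (v₁ y) * g y) - ∫ y, φ (v₂ y) * g y|
      = |∫ y, (φ (v₁ y) - φ (v₂ y)) * g y| := by rw [e1]
    _ ≤ ∫ y, |φ (v₁ y) - φ (v₂ y)| * |g y| := by
        simpa [Real.norm_eq_abs, abs_mul] using
          norm_integral_le_integral_norm (fun y => (φ (v₁ y) - φ (v₂ y)) * g y)
    _ ≤ ∫ y, Lφ * |v₁ y - v₂ y| * g y := by
        refine integral_mono ?_ hR fun y => ?_
        · have h := (hint₁.sub hint₂).abs
          refine h.congr (Filter.Eventually.of_forall fun y => ?_)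
          simp only [Pi.sub_apply]
          rw [← sub_mul, abs_mul]
        · rw [abs_of_nonneg (gauss_nonneg hν x y)]
          exact mul_le_mul_of_nonneg_right (hφ _ _) (gauss_nonneg hν x y)
    _ = Lφ * ∫ y, |v₁ y - v₂ y| * g y := by
        simp_rw [mul_assoc]
        exact integral_const_mul Lφ _
    _ ≤ Lφ * ((∫ y, |v₁ y - v₂ y| ^ (2 : ℝ)) ^ (1/2 : ℝ) *
          Real.sqrt (((2 * ν * Real.sqrt π) ^ n)⁻¹)) :=
        mul_le_mul_of_nonneg_left hcs hLφ
    _ = _ := by ring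

/-- Lipschitz estimate for the kernel-smoothed nominal function:
`‖A₀·(Φ_ν(v₁) − Φ_ν(v₂))‖_{L²} ≤ L_φ ‖v₁ − v₂‖_{L²} ‖A₀‖_{L²} (2ν√π)^{-n/2}`. -/
theorem smoothed_nominal_lipschitz (n : ℕ) (hn : 0 < n) (ν : ℝ) (hν : 0 < ν)
    (φ : ℝ → ℝ) (Lφ : ℝ) (hLφ : 0 ≤ Lφ)
    (hφ : ∀ x y, |φ x - φ y| ≤ Lφ * |x - y|)
    (A₀ : EuclideanSpace ℝ (Fin n) → ℝ)
    (hA : MemLp A₀ 2 (volume : Measure (EuclideanSpace ℝ (Fin n))))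
    (v₁ v₂ : EuclideanSpace ℝ (Fin n) → ℝ)
    (hv₁ : MemLp v₁ 2) (hv₂ : MemLp v₂ 2) :
    eLpNorm (fun x => A₀ x *
        ((∫ y, φ (v₁ y) * gaussK n ν x y) - ∫ y, φ (v₂ y) * gaussK n ν x y)) 2 volume
      ≤ ENNReal.ofReal Lφ * eLpNorm (fun x => v₁ x - v₂ x) 2 volume *
          eLpNorm A₀ 2 volume *
          ENNReal.ofReal (Real.sqrt (((2 * ν * Real.sqrt π) ^ n)⁻¹)) := by
  have hw : MemLp (fun x => v₁ x - v₂ x) 2 (volume : Measure (EuclideanSpace ℝ (Fin n))) :=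
    hv₁.sub hv₂
  have hNw0 : 0 ≤ (∫ y, |v₁ y - v₂ y| ^ (2 : ℝ)) ^ (1/2 : ℝ) :=
    Real.rpow_nonneg (integral_nonneg fun y => Real.rpow_nonneg (abs_nonneg _) _) _
  have hK0 : 0 ≤ Real.sqrt (((2 * ν * Real.sqrt π) ^ n)⁻¹) := Real.sqrt_nonneg _
  set Nw : ℝ := (∫ y, |v₁ y - v₂ y| ^ (2 : ℝ)) ^ (1/2 : ℝ) with hNwdef
  set K : ℝ := Real.sqrt (((2 * ν * Real.sqrt π) ^ n)⁻¹) with hKdef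
  have hC0 : 0 ≤ Lφ * Nw * K := by positivity
  have hmono : eLpNorm (fun x => A₀ x *
        ((∫ y, φ (v₁ y) * gaussK n ν x y) - ∫ y, φ (v₂ y) * gaussK n ν x y)) 2 volume
      ≤ eLpNorm (fun x => (Lφ * Nw * K) * A₀ x) 2 volume := by
    refine eLpNorm_mono fun x => ?_
    rw [Real.norm_eq_abs, Real.norm_eq_abs, abs_mul, abs_mul, abs_of_nonneg hC0,
      mul_comm (Lφ * Nw * K) |A₀ x|]
    exact mul_le_mul_of_nonneg_left (key_bound hν hLφ hφ hv₁ hv₂ x) (abs_nonneg _)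
  have heq : eLpNorm (fun x => (Lφ * Nw * K) * A₀ x) 2 volume
      = ENNReal.ofReal (Lφ * Nw * K) * eLpNorm A₀ 2 volume := by
    have h := eLpNorm_const_smul (Lφ * Nw * K) A₀ (2 : ℝ≥0∞) (volume)
    rw [show ((Lφ * Nw * K) • A₀) = fun x => (Lφ * Nw * K) * A₀ x from rfl] at h
    rw [h, Real.enorm_eq_ofReal hC0]
  have hwnorm : eLpNorm (fun x => v₁ x - v₂ x) 2 volume = ENNReal.ofReal Nw := by
    rw [hw.eLpNorm_eq_integral_rpow_norm two_ne_zero ENNReal.ofNat_ne_top, hNwdef]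
    norm_num [Real.norm_eq_abs]
  calc eLpNorm (fun x => A₀ x *
        ((∫ y, φ (v₁ y) * gaussK n ν x y) - ∫ y, φ (v₂ y) * gaussK n ν x y)) 2 volume
      ≤ eLpNorm (fun x => (Lφ * Nw * K) * A₀ x) 2 volume := hmono
    _ = ENNReal.ofReal (Lφ * Nw * K) * eLpNorm A₀ 2 volume := heq
    _ = ENNReal.ofReal Lφ * eLpNorm (fun x => v₁ x - v₂ x) 2 volume * eLpNorm A₀ 2 volume *
          ENNReal.ofReal K := by
        rw [ENNReal.ofReal_mul (by positivity), ENNReal.ofReal_mul hLφ, hwnorm]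
        ring
end
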